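/- Let Y be exponentially distributed with rate w > 0 and let U be uniform on [0, 1/ℓ], independent of Y, for some ℓ > 0. Define the seed S = U if Y ≤ 1/ℓ, and S = Y otherwise. Then for any threshold τ > 0, the inclusion probability P(S < τ) equals (1 - e^{-w·max(1/ℓ, τ)})·min(1, τℓ). -/

import Mathlib

open MeasureTheory ProbabilityTheory

/-- Inclusion probability of continuous `SH_ℓ`: `Y ~ Exp(w)`, `U ~ U[0, 1/ℓ]` independent,
seed `S = U` if `Y ≤ 1/ℓ` and `S = Y` otherwise.  Then
`P(S < τ) = (1 - e^{-w·max(1/ℓ,τ)})·min(1, τℓ)`. -/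
theorem stmt_3 {Ω : Type*} [MeasurableSpace Ω] (μ : Measure Ω) [IsProbabilityMeasure μ]
    (w ℓ τ : ℝ) (hw : 0 < w) (hℓ : 0 < ℓ) (hτ : 0 < τ)
    (Y U : Ω → ℝ) (hY : Measurable Y) (hU : Measurable U)
    (hindep : IndepFun Y U μ)
    (hYexp : ∀ t : ℝ, 0 ≤ t → μ {ω | t < Y ω} = ENNReal.ofReal (Real.exp (-w * t)))
    (hYpos : ∀ᵐ ω ∂μ, 0 < Y ω)
    (hUunif : MeasureTheory.pdf.IsUniform U (Set.Icc 0 (1 / ℓ)) μ volume) :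
    μ {ω | (if Y ω ≤ 1 / ℓ then U ω else Y ω) < τ}
      = ENNReal.ofReal ((1 - Real.exp (-w * max (1 / ℓ) τ)) * min 1 (τ * ℓ)) := by
  have h1ℓ : (0:ℝ) < 1 / ℓ := by positivity
  -- key: μ {t ≤ Y} = e^{-wt} for t > 0
  have key : ∀ t : ℝ, 0 < t → μ {ω | t ≤ Y ω} = ENNReal.ofReal (Real.exp (-w * t)) := by
    intro t ht
    set s : ℕ → Set Ω := fun n => {ω | max 0 (t - 1 / (n + 1)) < Y ω} with hs
    have hset : {ω | t ≤ Y ω} = ⋂ n : ℕ, s n := by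
      ext ω
      simp only [hs, Set.mem_setOf_eq, Set.mem_iInter]
      constructor
      · intro h n
        have : (0:ℝ) < 1 / (n + 1) := by positivity
        exact lt_of_lt_of_le (max_lt ht (by linarith)) h
      · intro h
        by_contra hc
        push_neg at hc
        obtain ⟨n, hn⟩ := exists_nat_one_div_lt (show (0:ℝ) < t - Y ω by linarith)
        have h2 := h n
        have h3 : Y ω < t - 1 / (n + 1) := by linarith
        have h4 : t - 1 / (n + 1) ≤ max 0 (t - 1 / (n + 1)) := le_max_right _ _
        linarith [h2, h3, h4]
    have hmeas : ∀ n, NullMeasurableSet (s n) μ :=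
      fun n => (hY measurableSet_Ioi).nullMeasurableSet
    have hanti : Antitone s := by
      intro m n hmn ω hω
      simp only [hs, Set.mem_setOf_eq] at hω ⊢
      refine lt_of_le_of_lt (max_le_max le_rfl ?_) hω
      have : (1:ℝ) / (n + 1) ≤ 1 / (m + 1) := by
        apply one_div_le_one_div_of_le (by positivity)
        exact_mod_cast by exact_mod_cast Nat.add_le_add_right hmn 1
      linarith
    have htend := tendsto_measure_iInter_atTop hmeas hanti ⟨0, measure_ne_top _ _⟩
    have heq : ∀ n : ℕ, μ (s n) = ENNReal.ofReal (Real.exp (-w * max 0 (t - 1 / (n + 1)))) :=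
      fun n => hYexp _ (le_max_left _ _)
    have h2 : Filter.Tendsto (fun n : ℕ => max 0 (t - 1 / (n + 1))) Filter.atTop (nhds t) := by
      have hsub : Filter.Tendsto (fun n : ℕ => t - 1 / ((n : ℝ) + 1)) Filter.atTop (nhds t) := by
        simpa using (tendsto_const_nhds (x := t)).sub tendsto_one_div_add_atTop_nhds_zero_nat
      have hmax := (tendsto_const_nhds (x := (0:ℝ))).max hsub
      rwa [max_eq_right ht.le] at hmax
    have h3 : Filter.Tendsto (fun n : ℕ => ENNReal.ofReal (Real.exp (-w * max 0 (t - 1 / (n + 1)))))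
        Filter.atTop (nhds (ENNReal.ofReal (Real.exp (-w * t)))) :=
      (ENNReal.continuous_ofReal.tendsto _).comp
        ((Real.continuous_exp.tendsto _).comp (h2.const_mul (-w)))
    have htend2 : Filter.Tendsto (μ ∘ s) Filter.atTop
        (nhds (ENNReal.ofReal (Real.exp (-w * t)))) :=
      h3.congr fun n => (heq n).symm
    rw [hset]
    exact tendsto_nhds_unique htend htend2
  have hexp_le_one : ∀ u : ℝ, 0 ≤ u → Real.exp (-w * u) ≤ 1 := by
    intro u hu
    apply Real.exp_le_one_iff.mpr
    nlinarith
  have hYle : μ {ω | Y ω ≤ 1 / ℓ} = ENNReal.ofReal (1 - Real.exp (-w * (1 / ℓ))) := by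
    have hc : {ω | Y ω ≤ 1 / ℓ} = {ω | 1 / ℓ < Y ω}ᶜ := by ext ω; simp [not_lt]
    have hm : MeasurableSet {ω | 1 / ℓ < Y ω} := hY measurableSet_Ioi
    rw [hc, measure_compl hm (measure_ne_top _ _), hYexp _ h1ℓ.le,
      measure_univ, ← ENNReal.ofReal_one,
      ← ENNReal.ofReal_sub _ (Real.exp_pos _).le]
  -- split the event
  have hsplit : {ω | (if Y ω ≤ 1 / ℓ then U ω else Y ω) < τ}
      = ({ω | Y ω ≤ 1 / ℓ} ∩ U ⁻¹' Set.Iio τ) ∪ ({ω | 1 / ℓ < Y ω} ∩ {ω | Y ω < τ}) := by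
    ext ω
    simp only [Set.mem_setOf_eq, Set.mem_union, Set.mem_inter_iff, Set.mem_preimage, Set.mem_Iio]
    by_cases h : Y ω ≤ 1 / ℓ
    · simp only [if_pos h, h, true_and]
      constructor
      · exact fun hu => Or.inl hu
      · rintro (hu | ⟨h2, _⟩)
        · exact hu
        · linarith
    · simp only [if_neg h]
      have h' := not_le.mp h
      constructor
      · exact fun hy => Or.inr ⟨h', hy⟩
      · rintro (⟨h2, _⟩ | ⟨_, hy⟩)
        · exact absurd h2 h
        · exact hy
  have hdisj : Disjoint ({ω | Y ω ≤ 1 / ℓ} ∩ U ⁻¹' Set.Iio τ)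
      ({ω | 1 / ℓ < Y ω} ∩ {ω | Y ω < τ}) := by
    apply Set.disjoint_left.mpr
    rintro ω ⟨h1, _⟩ ⟨h2, _⟩
    simp only [Set.mem_setOf_eq] at h2
    exact (not_lt.mpr h1) h2
  have hmeas2 : MeasurableSet ({ω | 1 / ℓ < Y ω} ∩ {ω | Y ω < τ}) :=
    (hY measurableSet_Ioi).inter (hY measurableSet_Iio)
  rw [hsplit, measure_union hdisj hmeas2]
  have hvol : volume (Set.Icc (0:ℝ) (1 / ℓ)) = ENNReal.ofReal (1 / ℓ) := by
    rw [Real.volume_Icc, sub_zero]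
  have hvol0 : volume (Set.Icc (0:ℝ) (1 / ℓ)) ≠ 0 := by
    rw [hvol]; simpa [ENNReal.ofReal_eq_zero, not_le] using h1ℓ
  have hvolt : volume (Set.Icc (0:ℝ) (1 / ℓ)) ≠ ⊤ := by rw [hvol]; exact ENNReal.ofReal_ne_top
  have hUprob := hUunif.measure_preimage hvol0 hvolt (measurableSet_Iio (a := τ))
  have hind := hindep.measure_inter_preimage_eq_mul (Set.Iic (1/ℓ)) (Set.Iio τ)
    measurableSet_Iic measurableSet_Iio
  have hIic : Y ⁻¹' Set.Iic (1/ℓ) = {ω | Y ω ≤ 1 / ℓ} := rfl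
  rw [hIic] at hind
  rcases le_or_gt τ (1 / ℓ) with hcase | hcase
  · -- τ ≤ 1/ℓ
    have hempty : {ω | 1 / ℓ < Y ω} ∩ {ω | Y ω < τ} = ∅ := by
      ext ω; simp only [Set.mem_inter_iff, Set.mem_setOf_eq, Set.mem_empty_iff_false, iff_false]
      rintro ⟨h1, h2⟩; linarith
    have hinter : Set.Icc (0:ℝ) (1 / ℓ) ∩ Set.Iio τ = Set.Ico 0 τ := by
      ext x
      simp only [Set.mem_inter_iff, Set.mem_Icc, Set.mem_Iio, Set.mem_Ico]
      constructor
      · rintro ⟨⟨h1, _⟩, h2⟩; exact ⟨h1, h2⟩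
      · rintro ⟨h1, h2⟩; exact ⟨⟨h1, by linarith⟩, h2⟩
    have hU2 : μ (U ⁻¹' Set.Iio τ) = ENNReal.ofReal (τ * ℓ) := by
      rw [hUprob, hinter, Real.volume_Ico, hvol, sub_zero,
        ← ENNReal.ofReal_div_of_pos h1ℓ]
      congr 1
      field_simp
    have hmaxτ : max (1 / ℓ) τ = 1 / ℓ := max_eq_left hcase
    have hminτ : min 1 (τ * ℓ) = τ * ℓ := by
      apply min_eq_right
      calc τ * ℓ ≤ (1 / ℓ) * ℓ := by nlinarith
        _ = 1 := by field_simp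
    rw [hempty, measure_empty, add_zero, hind, hYle, hU2, hmaxτ, hminτ,
      ← ENNReal.ofReal_mul (by nlinarith [hexp_le_one (1/ℓ) h1ℓ.le])]
  · -- 1/ℓ < τ
    have hinter : Set.Icc (0:ℝ) (1 / ℓ) ∩ Set.Iio τ = Set.Icc 0 (1 / ℓ) := by
      apply Set.inter_eq_left.mpr
      intro x hx
      exact lt_of_le_of_lt hx.2 hcase
    have hU2 : μ (U ⁻¹' Set.Iio τ) = 1 := by
      rw [hUprob, hinter, ENNReal.div_self hvol0 hvolt]
    have hdiff : {ω | 1 / ℓ < Y ω} ∩ {ω | Y ω < τ} = {ω | 1 / ℓ < Y ω} \ {ω | τ ≤ Y ω} := by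
      ext ω; simp only [Set.mem_inter_iff, Set.mem_setOf_eq, Set.mem_diff, not_le]
    have hsub : {ω | τ ≤ Y ω} ⊆ {ω | 1 / ℓ < Y ω} :=
      fun ω h => lt_of_lt_of_le hcase h
    have h2nd : μ ({ω | 1 / ℓ < Y ω} ∩ {ω | Y ω < τ})
        = ENNReal.ofReal (Real.exp (-w * (1 / ℓ)) - Real.exp (-w * τ)) := by
      rw [hdiff, measure_diff hsub (hY measurableSet_Ici).nullMeasurableSet (measure_ne_top _ _),
        hYexp _ h1ℓ.le, key τ hτ, ← ENNReal.ofReal_sub _ (Real.exp_pos _).le]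
    have hmaxτ : max (1 / ℓ) τ = τ := max_eq_right hcase.le
    have hminτ : min 1 (τ * ℓ) = 1 := by
      apply min_eq_left
      calc (1:ℝ) = (1 / ℓ) * ℓ := by field_simp
        _ ≤ τ * ℓ := by nlinarith
    have hexpmono : Real.exp (-w * τ) ≤ Real.exp (-w * (1 / ℓ)) := by
      apply Real.exp_le_exp.mpr; nlinarith
    rw [hind, hYle, hU2, h2nd, mul_one, hmaxτ, hminτ, mul_one,
      ← ENNReal.ofReal_add (by nlinarith [hexp_le_one (1/ℓ) h1ℓ.le]) (by linarith)]
    ring_nf
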